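/- arXiv:2101.11879 — 2 statements merged into one kernel-verified Lean document; each statement's English description precedes it below -/
import Mathlib

section
/- Let A, B, r, θ ∈ ℝ with r ≠ 0. Define λ(x,y) = −r·(cos θ·x + sin θ·y) and f(x,y) = A·exp(2r·(cos θ·x + sin θ·y) + B) on ℝ². Then D₁(λ,f) = 0 and D₂(λ,f) = 0, where D₁ and D₂ are the operators D₁(λ,f) = (λ_x+f_x)(2λ_x f_x + f_{xx}) + (λ_y+f_y)(2λ_y f_x + f_{xy}) − (6λ_x² f_x + 2λ_{xx} f_x + 5λ_x f_{xx} + f_{xxx}) − (6λ_y² f_x + 2λ_{yy} f_x + 5λ_y f_{xy} + f_{xyy}) and analogously D₂ with the roles of the first differentiation index replaced by y. -/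
noncomputable def dx (f : ℝ → ℝ → ℝ) : ℝ → ℝ → ℝ := fun x y => deriv (fun t => f t y) x
noncomputable def dy (f : ℝ → ℝ → ℝ) : ℝ → ℝ → ℝ := fun x y => deriv (fun t => f x t) y

/-- The operator `D₁` from the paper. -/
noncomputable def D1 (l f : ℝ → ℝ → ℝ) : ℝ → ℝ → ℝ := fun x y =>
  (dx l x y + dx f x y) * (2 * dx l x y * dx f x y + dx (dx f) x y)
  + (dy l x y + dy f x y) * (2 * dy l x y * dx f x y + dy (dx f) x y)
  - (6 * (dx l x y)^2 * dx f x y + 2 * dx (dx l) x y * dx f x y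
      + 5 * dx l x y * dx (dx f) x y + dx (dx (dx f)) x y)
  - (6 * (dy l x y)^2 * dx f x y + 2 * dy (dy l) x y * dx f x y
      + 5 * dy l x y * dy (dx f) x y + dy (dy (dx f)) x y)

/-- The operator `D₂` from the paper. -/
noncomputable def D2 (l f : ℝ → ℝ → ℝ) : ℝ → ℝ → ℝ := fun x y =>
  (dx l x y + dx f x y) * (2 * dx l x y * dy f x y + dx (dy f) x y)
  + (dy l x y + dy f x y) * (2 * dy l x y * dy f x y + dy (dy f) x y)
  - (6 * (dx l x y)^2 * dy f x y + 2 * dx (dx l) x y * dy f x y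
      + 5 * dx l x y * dx (dy f) x y + dx (dx (dy f)) x y)
  - (6 * (dy l x y)^2 * dy f x y + 2 * dy (dy l) x y * dy f x y
      + 5 * dy l x y * dy (dy f) x y + dy (dy (dy f)) x y)

lemma dx_exp (A r c s B : ℝ) :
    dx (fun x y => A * Real.exp (2*r*(c*x + s*y)+B)) =
    fun x y => (2*r*c*A) * Real.exp (2*r*(c*x + s*y)+B) := by
  funext x y
  simp only [dx]
  have h1 : HasDerivAt (fun t : ℝ => 2*r*(c*t + s*y)+B) (2*r*c) x := by
    simpa using ((((hasDerivAt_id x).const_mul c).add_const (s*y)).const_mul (2*r)).add_const B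
  have h := (h1.exp).const_mul A
  have h' : HasDerivAt (fun t => A * Real.exp (2*r*(c*t + s*y)+B))
      ((2*r*c*A) * Real.exp (2*r*(c*x + s*y)+B)) x := by
    exact h.congr_deriv (by ring)
  exact h'.deriv

lemma dy_exp (A r c s B : ℝ) :
    dy (fun x y => A * Real.exp (2*r*(c*x + s*y)+B)) =
    fun x y => (2*r*s*A) * Real.exp (2*r*(c*x + s*y)+B) := by
  funext x y
  simp only [dy]
  have h1 : HasDerivAt (fun t : ℝ => 2*r*(c*x + s*t)+B) (2*r*s) y := by
    simpa using ((((hasDerivAt_id y).const_mul s).const_add (c*x)).const_mul (2*r)).add_const B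
  have h := (h1.exp).const_mul A
  have h' : HasDerivAt (fun t => A * Real.exp (2*r*(c*x + s*t)+B))
      ((2*r*s*A) * Real.exp (2*r*(c*x + s*y)+B)) y := by
    exact h.congr_deriv (by ring)
  exact h'.deriv

lemma dx_lin (r c s : ℝ) :
    dx (fun x y => -r * (c * x + s * y)) = fun _ _ => -r * c := by
  funext x y
  simp only [dx]
  have h : HasDerivAt (fun t : ℝ => -r * (c*t + s*y)) (-r*c) x := by
    simpa using (((hasDerivAt_id x).const_mul c).add_const (s*y)).const_mul (-r)
  exact h.deriv

lemma dy_lin (r c s : ℝ) :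
    dy (fun x y => -r * (c * x + s * y)) = fun _ _ => -r * s := by
  funext x y
  simp only [dy]
  have h : HasDerivAt (fun t : ℝ => -r * (c*x + s*t)) (-r*s) y := by
    simpa using (((hasDerivAt_id y).const_mul s).const_add (c*x)).const_mul (-r)
  exact h.deriv

lemma dx_const (c : ℝ) : dx (fun _ _ => c) = fun _ _ => 0 := by
  funext x y; simp [dx]

lemma dy_const (c : ℝ) : dy (fun _ _ => c) = fun _ _ => 0 := by
  funext x y; simp [dy]

theorem stmt8 (A B r θ : ℝ) (hr : r ≠ 0) :
    ∀ x y : ℝ,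
      D1 (fun x y => -r * (Real.cos θ * x + Real.sin θ * y))
         (fun x y => A * Real.exp (2 * r * (Real.cos θ * x + Real.sin θ * y) + B)) x y = 0 ∧
      D2 (fun x y => -r * (Real.cos θ * x + Real.sin θ * y))
         (fun x y => A * Real.exp (2 * r * (Real.cos θ * x + Real.sin θ * y) + B)) x y = 0 := by
  intro x y
  constructor <;>
  · simp only [D1, D2, dx_exp, dy_exp, dx_lin, dy_lin, dx_const, dy_const]
    ring
end

section
/- Let A, B, t ∈ ℝ with A ≠ 0, and let U ⊆ ℝ² be an open set on which v(x,y) := A·(cos t·x + sin t·y) + B > 0. Define f : U → ℝ by f(x,y) = −2·log(v(x,y)). Then f simultaneously satisfies on U: (i) f_x·f_{xx} + f_y·f_{xy} − f_{xxx} − f_{xyy} = 0, (ii) f_x·f_{yx} + f_y·f_{yy} − f_{yxx} − f_{yyy} = 0, (iii) 2·(f_x² − f_y²) − 4·(f_{xx} − f_{yy}) = 0, and (iv) 4·f_x·f_y − 8·f_{xy} = 0; moreover (f_x, f_y) ≠ (0,0) on U. -/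
/-- `E₁ f = f_x f_xx + f_y f_xy - f_xxx - f_xyy` (this is `D₁(λ,f)` for `λ` constant). -/
noncomputable def E1 (f : ℝ → ℝ → ℝ) : ℝ → ℝ → ℝ := fun x y =>
  dx f x y * dx (dx f) x y + dy f x y * dy (dx f) x y
    - dx (dx (dx f)) x y - dy (dy (dx f)) x y

/-- `E₂ f = f_x f_yx + f_y f_yy - f_yxx - f_yyy` (this is `D₂(λ,f)` for `λ` constant). -/
noncomputable def E2 (f : ℝ → ℝ → ℝ) : ℝ → ℝ → ℝ := fun x y =>
  dx f x y * dx (dy f) x y + dy f x y * dy (dy f) x y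
    - dx (dx (dy f)) x y - dy (dy (dy f)) x y

lemma hlin (a k x : ℝ) : HasDerivAt (fun s => a*s+k) a x := by
  simpa using ((hasDerivAt_id x).const_mul a).add_const k
lemma ev_ne (a k x : ℝ) (h : a*x+k ≠ 0) : ∀ᶠ s in nhds x, a*s+k ≠ 0 := by
  have hc : Continuous (fun s : ℝ => a*s+k) := by continuity
  exact hc.continuousAt.eventually_ne h
lemma deriv_clog (c a k x : ℝ) (h : a*x+k ≠ 0) :
    deriv (fun s => c * Real.log (a*s+k)) x = c*a/(a*x+k) := by
  rw [(((hlin a k x).log h).const_mul c).deriv]; ring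
lemma deriv_cpow (c a k x : ℝ) (n : ℕ) (h : a*x+k ≠ 0) :
    deriv (fun s => c / (a*s+k)^(n+1)) x = -((n:ℝ)+1)*c*a/(a*x+k)^(n+2) := by
  have h1 := (show HasDerivAt (fun s => c * ((a*s+k)^(n+1))⁻¹) (c * (-(↑(n + 1) * (a * x + k) ^ (n + 1 - 1) * a) / ((a * x + k) ^ (n + 1)) ^ 2)) x from (((hlin a k x).pow (n+1)).inv (pow_ne_zero _ h)).const_mul c).deriv
  simp only [div_eq_mul_inv]
  rw [h1]
  simp only [Nat.add_sub_cancel, Nat.cast_add, Nat.cast_one]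
  field_simp
  ring

noncomputable def Gf (a b B : ℝ) : ℝ → ℝ → ℝ := fun x y => -2 * Real.log (a*x+b*y+B)

lemma dxG (a b B x y : ℝ) (h : a*x+b*y+B ≠ 0) :
    dx (Gf a b B) x y = -2*a/(a*x+b*y+B) := by
  show deriv (fun s => Gf a b B s y) x = _
  have he : (fun s => Gf a b B s y) = (fun s => -2 * Real.log (a*s+(b*y+B))) := by
    funext s; show -2 * Real.log (a*s+b*y+B) = _; rw [add_assoc]
  rw [he, deriv_clog (-2) a (b*y+B) x (by rwa [add_assoc] at h), ← add_assoc]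

lemma dyG (a b B x y : ℝ) (h : a*x+b*y+B ≠ 0) :
    dy (Gf a b B) x y = -2*b/(a*x+b*y+B) := by
  show deriv (fun s => Gf a b B x s) y = _
  have he : (fun s => Gf a b B x s) = (fun s => -2 * Real.log (b*s+(a*x+B))) := by
    funext s; show -2 * Real.log (a*x+b*s+B) = _; ring_nf
  rw [he, deriv_clog (-2) b (a*x+B) y (by rw [show b*y+(a*x+B) = a*x+b*y+B by ring]; exact h)]
  rw [show b*y+(a*x+B) = a*x+b*y+B by ring]

lemma dxdxG (a b B x y : ℝ) (h : a*x+b*y+B ≠ 0) :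
    dx (dx (Gf a b B)) x y = 2*a^2/(a*x+b*y+B)^2 := by
  show deriv (fun s => dx (Gf a b B) s y) x = _
  have hev : (fun s => dx (Gf a b B) s y) =ᶠ[nhds x] (fun s => (-2*a) / (a*s+(b*y+B))^(0+1)) := by
    filter_upwards [ev_ne a (b*y+B) x (by rwa [add_assoc] at h)] with s hs
    rw [pow_one, dxG a b B s y (by rwa [← add_assoc] at hs), add_assoc]
  rw [hev.deriv_eq, deriv_cpow (-2*a) a (b*y+B) x 0 (by rwa [add_assoc] at h), ← add_assoc]
  norm_num
  ring

lemma dydxG (a b B x y : ℝ) (h : a*x+b*y+B ≠ 0) :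
    dy (dx (Gf a b B)) x y = 2*a*b/(a*x+b*y+B)^2 := by
  show deriv (fun s => dx (Gf a b B) x s) y = _
  have hev : (fun s => dx (Gf a b B) x s) =ᶠ[nhds y] (fun s => (-2*a) / (b*s+(a*x+B))^(0+1)) := by
    filter_upwards [ev_ne b (a*x+B) y (by rw [show b*y+(a*x+B) = a*x+b*y+B by ring]; exact h)] with s hs
    rw [pow_one, dxG a b B x s (by rw [show a*x+b*s+B = b*s+(a*x+B) by ring]; exact hs),
      show a*x+b*s+B = b*s+(a*x+B) by ring]
  rw [hev.deriv_eq, deriv_cpow (-2*a) b (a*x+B) y 0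
    (by rw [show b*y+(a*x+B) = a*x+b*y+B by ring]; exact h),
    show b*y+(a*x+B) = a*x+b*y+B by ring]
  norm_num

lemma dx_of_eq (F : ℝ → ℝ → ℝ) (c a b B : ℝ) (n : ℕ) (x y : ℝ) (h : a*x+b*y+B ≠ 0)
    (hF : ∀ u v : ℝ, a*u+b*v+B ≠ 0 → F u v = c/(a*u+b*v+B)^(n+1)) :
    dx F x y = -((n:ℝ)+1)*c*a/(a*x+b*y+B)^(n+2) := by
  show deriv (fun s => F s y) x = _
  have hev : (fun s => F s y) =ᶠ[nhds x] (fun s => c / (a*s+(b*y+B))^(n+1)) := by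
    filter_upwards [ev_ne a (b*y+B) x (by rwa [add_assoc] at h)] with s hs
    rw [hF s y (by rwa [← add_assoc] at hs), add_assoc]
  rw [hev.deriv_eq, deriv_cpow c a (b*y+B) x n (by rwa [add_assoc] at h), ← add_assoc]

lemma dy_of_eq (F : ℝ → ℝ → ℝ) (c a b B : ℝ) (n : ℕ) (x y : ℝ) (h : a*x+b*y+B ≠ 0)
    (hF : ∀ u v : ℝ, a*u+b*v+B ≠ 0 → F u v = c/(a*u+b*v+B)^(n+1)) :
    dy F x y = -((n:ℝ)+1)*c*b/(a*x+b*y+B)^(n+2) := by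
  show deriv (fun s => F x s) y = _
  have hev : (fun s => F x s) =ᶠ[nhds y] (fun s => c / (b*s+(a*x+B))^(n+1)) := by
    filter_upwards [ev_ne b (a*x+B) y (by rw [show b*y+(a*x+B) = a*x+b*y+B by ring]; exact h)] with s hs
    rw [hF x s (by rw [show a*x+b*s+B = b*s+(a*x+B) by ring]; exact hs),
      show a*x+b*s+B = b*s+(a*x+B) by ring]
  rw [hev.deriv_eq, deriv_cpow c b (a*x+B) y n
    (by rw [show b*y+(a*x+B) = a*x+b*y+B by ring]; exact h),
    show b*y+(a*x+B) = a*x+b*y+B by ring]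

lemma dxdyG (a b B x y : ℝ) (h : a*x+b*y+B ≠ 0) :
    dx (dy (Gf a b B)) x y = 2*a*b/(a*x+b*y+B)^2 := by
  rw [dx_of_eq (dy (Gf a b B)) (-2*b) a b B 0 x y h
    (fun u v hv => by rw [dyG a b B u v hv, pow_one])]
  norm_num; ring

lemma dydyG (a b B x y : ℝ) (h : a*x+b*y+B ≠ 0) :
    dy (dy (Gf a b B)) x y = 2*b^2/(a*x+b*y+B)^2 := by
  rw [dy_of_eq (dy (Gf a b B)) (-2*b) a b B 0 x y h
    (fun u v hv => by rw [dyG a b B u v hv, pow_one])]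
  norm_num; ring

lemma dxdxdxG (a b B x y : ℝ) (h : a*x+b*y+B ≠ 0) :
    dx (dx (dx (Gf a b B))) x y = -4*a^3/(a*x+b*y+B)^3 := by
  rw [dx_of_eq (dx (dx (Gf a b B))) (2*a^2) a b B 1 x y h
    (fun u v hv => by rw [dxdxG a b B u v hv])]
  norm_num; ring

lemma dydydxG (a b B x y : ℝ) (h : a*x+b*y+B ≠ 0) :
    dy (dy (dx (Gf a b B))) x y = -4*a*b^2/(a*x+b*y+B)^3 := by
  rw [dy_of_eq (dy (dx (Gf a b B))) (2*a*b) a b B 1 x y h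
    (fun u v hv => by rw [dydxG a b B u v hv])]
  norm_num; ring

lemma dxdxdyG (a b B x y : ℝ) (h : a*x+b*y+B ≠ 0) :
    dx (dx (dy (Gf a b B))) x y = -4*a^2*b/(a*x+b*y+B)^3 := by
  rw [dx_of_eq (dx (dy (Gf a b B))) (2*a*b) a b B 1 x y h
    (fun u v hv => by rw [dxdyG a b B u v hv])]
  norm_num; ring

lemma dydydyG (a b B x y : ℝ) (h : a*x+b*y+B ≠ 0) :
    dy (dy (dy (Gf a b B))) x y = -4*b^3/(a*x+b*y+B)^3 := by
  rw [dy_of_eq (dy (dy (Gf a b B))) (2*b^2) a b B 1 x y h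
    (fun u v hv => by rw [dydyG a b B u v hv])]
  norm_num; ring

theorem stmt12 (A B t : ℝ) (hA : A ≠ 0) (U : Set (ℝ × ℝ)) (hU : IsOpen U)
    (hpos : ∀ p ∈ U, A * (Real.cos t * p.1 + Real.sin t * p.2) + B > 0) :
    ∀ p ∈ U,
      E1 (fun x y => -2 * Real.log (A * (Real.cos t * x + Real.sin t * y) + B)) p.1 p.2 = 0 ∧
      E2 (fun x y => -2 * Real.log (A * (Real.cos t * x + Real.sin t * y) + B)) p.1 p.2 = 0 ∧
      2 * ((dx (fun x y => -2 * Real.log (A * (Real.cos t * x + Real.sin t * y) + B)) p.1 p.2)^2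
            - (dy (fun x y => -2 * Real.log (A * (Real.cos t * x + Real.sin t * y) + B)) p.1 p.2)^2)
        - 4 * (dx (dx (fun x y => -2 * Real.log (A * (Real.cos t * x + Real.sin t * y) + B))) p.1 p.2
            - dy (dy (fun x y => -2 * Real.log (A * (Real.cos t * x + Real.sin t * y) + B))) p.1 p.2) = 0 ∧
      4 * dx (fun x y => -2 * Real.log (A * (Real.cos t * x + Real.sin t * y) + B)) p.1 p.2
          * dy (fun x y => -2 * Real.log (A * (Real.cos t * x + Real.sin t * y) + B)) p.1 p.2
        - 8 * dy (dx (fun x y => -2 * Real.log (A * (Real.cos t * x + Real.sin t * y) + B))) p.1 p.2 = 0 ∧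
      ¬ (dx (fun x y => -2 * Real.log (A * (Real.cos t * x + Real.sin t * y) + B)) p.1 p.2 = 0 ∧
          dy (fun x y => -2 * Real.log (A * (Real.cos t * x + Real.sin t * y) + B)) p.1 p.2 = 0) := by
  intro p hp
  have hfun : (fun x y => -2 * Real.log (A * (Real.cos t * x + Real.sin t * y) + B))
      = Gf (A * Real.cos t) (A * Real.sin t) B := by
    funext x y
    show _ = -2 * Real.log (A * Real.cos t * x + A * Real.sin t * y + B)
    rw [show A * (Real.cos t * x + Real.sin t * y) + B
      = A * Real.cos t * x + A * Real.sin t * y + B by ring]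
  set a := A * Real.cos t with ha
  set b := A * Real.sin t with hb
  have hv : a * p.1 + b * p.2 + B ≠ 0 := by
    have h1 := ne_of_gt (hpos p hp)
    rw [show A * (Real.cos t * p.1 + Real.sin t * p.2) + B = a * p.1 + b * p.2 + B by
      rw [ha, hb]; ring] at h1
    exact h1
  rw [hfun]
  refine ⟨?_, ?_, ?_, ?_, ?_⟩
  · show E1 (Gf a b B) p.1 p.2 = 0
    simp only [E1]
    rw [dxG a b B _ _ hv, dyG a b B _ _ hv, dxdxG a b B _ _ hv, dydxG a b B _ _ hv,
      dxdxdxG a b B _ _ hv, dydydxG a b B _ _ hv]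
    field_simp
    ring
  · show E2 (Gf a b B) p.1 p.2 = 0
    simp only [E2]
    rw [dxG a b B _ _ hv, dyG a b B _ _ hv, dxdyG a b B _ _ hv, dydyG a b B _ _ hv,
      dxdxdyG a b B _ _ hv, dydydyG a b B _ _ hv]
    field_simp
    ring
  · rw [dxG a b B _ _ hv, dyG a b B _ _ hv, dxdxG a b B _ _ hv, dydyG a b B _ _ hv]
    field_simp
    ring
  · rw [dxG a b B _ _ hv, dyG a b B _ _ hv, dydxG a b B _ _ hv]
    field_simp
    ring
  · rintro ⟨h1, h2⟩
    rw [dxG a b B _ _ hv] at h1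
    rw [dyG a b B _ _ hv] at h2
    rw [div_eq_zero_iff] at h1 h2
    have hc : Real.cos t = 0 := by
      rcases h1 with h1 | h1
      · have ha0 : A * Real.cos t = 0 := by rw [← ha]; linarith
        exact (mul_eq_zero.1 ha0).resolve_left hA
      · exact absurd h1 hv
    have hs : Real.sin t = 0 := by
      rcases h2 with h2 | h2
      · have hb0 : A * Real.sin t = 0 := by rw [← hb]; linarith
        exact (mul_eq_zero.1 hb0).resolve_left hA
      · exact absurd h2 hv
    have := Real.sin_sq_add_cos_sq t
    rw [hc, hs] at this
    norm_num at this
end
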